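/- Let A be a commutative ring with unity, let {T_λ : λ ∈ Λ} be a collection of A-weighted lattice tiles, let I be the ideal of the Laurent-polynomial ring A[X^ℤ,Y^ℤ] = AddMonoidAlgebra A (ℤ×ℤ) generated by {f_{T_λ} : λ ∈ Λ}, and let U be an A-weighted lattice tile with f_U ∈ I. Then {T_λ : λ ∈ Λ} A-tiles U; that is, U is a finite A-linear combination of translates of the tiles T_λ. -/

import Mathlib

open Finset

/-- The `A`-weighted lattice tile with (finitely supported) weights `w`. -/
noncomputable def latticeTile (A : Type*) [CommRing A] (w : ℤ × ℤ →₀ A)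
    (p : ℝ × ℝ) : A :=
  w (⌊p.1⌋, ⌊p.2⌋)

/-- The polynomial `f_T = ∑ w_{ij} X^i Y^j (X-1)(Y-1)` of the lattice tile with
weights `w`, as an element of the Laurent-polynomial ring
`A[X^ℤ, Y^ℤ] = AddMonoidAlgebra A (ℤ × ℤ)`. -/
noncomputable def latticePoly (A : Type*) [CommRing A] (w : ℤ × ℤ →₀ A) :
    AddMonoidAlgebra A (ℤ × ℤ) :=
  w.sum fun ij a => AddMonoidAlgebra.single ij a *
    ((AddMonoidAlgebra.single ((1 : ℤ), (0 : ℤ)) (1 : A) - 1) *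
      (AddMonoidAlgebra.single ((0 : ℤ), (1 : ℤ)) (1 : A) - 1))

section Aux

variable {A : Type*} [CommRing A]

/-- The identity, viewed as a map from finitely supported functions to the
add-monoid algebra. -/
def toAlg (w : ℤ × ℤ →₀ A) : AddMonoidAlgebra A (ℤ × ℤ) := AddMonoidAlgebra.ofCoeff w

lemma shift_eq_zero (f : AddMonoidAlgebra A (ℤ × ℤ)) (m : ℤ × ℤ)
    (φ : (ℤ × ℤ) →+ ℤ) (hφ : 0 < φ m) (hf : ∀ x, f.coeff (x + m) = f.coeff x) : f = 0 := by
  by_contra h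
  have hs : f.coeff.support.Nonempty :=
    Finsupp.support_nonempty_iff.mpr (AddMonoidAlgebra.coeff_eq_zero.not.mpr h)
  obtain ⟨x, hx, hmax⟩ := f.coeff.support.exists_max_image φ hs
  have hx' : x + m ∈ f.coeff.support := by
    rw [Finsupp.mem_support_iff] at *
    rw [hf]; exact hx
  have := hmax _ hx'
  simp [map_add] at this
  omega

lemma cancel_single_sub_one (m : ℤ × ℤ) (φ : (ℤ × ℤ) →+ ℤ) (hφ : 0 < φ m)
    (f : AddMonoidAlgebra A (ℤ × ℤ))
    (h : f * (AddMonoidAlgebra.single m 1 - 1) = 0) : f = 0 := by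
  apply shift_eq_zero f m φ hφ
  intro x
  have h2 : f * AddMonoidAlgebra.single m 1 = f := by
    rwa [mul_sub, mul_one, sub_eq_zero] at h
  have := congrArg (fun g : AddMonoidAlgebra A (ℤ × ℤ) => g.coeff (x + m)) h2
  simpa [AddMonoidAlgebra.coeff_mul_single_apply] using this.symm

lemma latticePoly_eq_mul (w : ℤ × ℤ →₀ A) :
    latticePoly A w = toAlg w *
      ((AddMonoidAlgebra.single ((1 : ℤ), (0 : ℤ)) (1 : A) - 1) *
        (AddMonoidAlgebra.single ((0 : ℤ), (1 : ℤ)) (1 : A) - 1)) := by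
  rw [latticePoly, ← Finsupp.sum_mul]
  congr 1
  exact AddMonoidAlgebra.sum_coeff_single (toAlg w)

lemma cancel_g (f : AddMonoidAlgebra A (ℤ × ℤ))
    (h : f * ((AddMonoidAlgebra.single ((1 : ℤ), (0 : ℤ)) (1 : A) - 1) *
      (AddMonoidAlgebra.single ((0 : ℤ), (1 : ℤ)) (1 : A) - 1)) = 0) : f = 0 := by
  rw [← mul_assoc] at h
  have h1 := cancel_single_sub_one ((0 : ℤ), (1 : ℤ)) (AddMonoidHom.snd ℤ ℤ)
    (by norm_num) _ h
  exact cancel_single_sub_one ((1 : ℤ), (0 : ℤ)) (AddMonoidHom.fst ℤ ℤ)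
    (by norm_num) f h1

lemma mul_apply_eq_sum (q f : AddMonoidAlgebra A (ℤ × ℤ)) (ij : ℤ × ℤ) :
    (q * f).coeff ij = ∑ m ∈ q.coeff.support, q.coeff m * f.coeff (ij - m) := by
  have h : q * f = q.coeff.sum fun m a => AddMonoidAlgebra.single m a * f := by
    conv_lhs => rw [← AddMonoidAlgebra.sum_coeff_single q, Finsupp.sum_mul]
  rw [h, AddMonoidAlgebra.coeff_finsuppSum, Finsupp.sum_apply, Finsupp.sum]
  refine Finset.sum_congr rfl fun m hm => ?_
  rw [AddMonoidAlgebra.coeff_single_mul_apply, neg_add_eq_sub]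

end Aux

theorem lattice_tiles_of_mem_ideal (A : Type*) [CommRing A] {Λ : Type*}
    (ww : Λ → (ℤ × ℤ →₀ A)) (u : ℤ × ℤ →₀ A)
    (h : latticePoly A u ∈ Ideal.span (Set.range fun l => latticePoly A (ww l))) :
    ∃ (n : ℕ) (a : Fin n → A) (lam : Fin n → Λ) (v : Fin n → ℝ × ℝ),
      ∀ p : ℝ × ℝ, latticeTile A u p =
        ∑ i, a i * latticeTile A (ww (lam i)) (p.1 - (v i).1, p.2 - (v i).2) := by
  rw [Ideal.span, Finsupp.mem_span_range_iff_exists_finsupp] at h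
  obtain ⟨c, hc⟩ := h
  set g : AddMonoidAlgebra A (ℤ × ℤ) :=
    (AddMonoidAlgebra.single ((1 : ℤ), (0 : ℤ)) (1 : A) - 1) *
      (AddMonoidAlgebra.single ((0 : ℤ), (1 : ℤ)) (1 : A) - 1) with hg
  have key : toAlg u = c.sum fun l q => q * toAlg (ww l) := by
    have h1 : (c.sum fun l q => q * toAlg (ww l)) * g = toAlg u * g := by
      rw [Finsupp.sum_mul, ← latticePoly_eq_mul, ← hc, Finsupp.sum, Finsupp.sum]
      refine Finset.sum_congr rfl fun l _ => ?_
      rw [smul_eq_mul, latticePoly_eq_mul, mul_assoc]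
    have h2 : (toAlg u - c.sum fun l q => q * toAlg (ww l)) * g = 0 := by
      rw [sub_mul, h1, sub_self]
    exact sub_eq_zero.mp (cancel_g _ (hg ▸ h2))
  -- pointwise expansion
  have expand : ∀ ij : ℤ × ℤ, u ij =
      ∑ x ∈ c.support.sigma (fun l => (c l).coeff.support),
        (c x.1).coeff x.2 * ww x.1 (ij - x.2) := by
    intro ij
    have := congrArg (fun f : AddMonoidAlgebra A (ℤ × ℤ) => f.coeff ij) key
    simp only [toAlg, AddMonoidAlgebra.coeff_ofCoeff] at this
    rw [this, AddMonoidAlgebra.coeff_finsuppSum, Finsupp.sum_apply, Finsupp.sum, Finset.sum_sigma]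
    refine Finset.sum_congr rfl fun l _ => ?_
    exact mul_apply_eq_sum (c l) (toAlg (ww l)) ij
  set s := c.support.sigma (fun l => (c l).coeff.support) with hs
  refine ⟨s.card, fun i => (c (s.equivFin.symm i).1.1).coeff ((s.equivFin.symm i).1.2),
    fun i => (s.equivFin.symm i).1.1,
    fun i => (((s.equivFin.symm i).1.2.1 : ℝ), ((s.equivFin.symm i).1.2.2 : ℝ)),
    fun p => ?_⟩
  have hterm : ∀ x : (_ : Λ) × (ℤ × ℤ),
      (c x.1).coeff x.2 * latticeTile A (ww x.1)
        (p.1 - (x.2.1 : ℝ), p.2 - (x.2.2 : ℝ)) =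
      (c x.1).coeff x.2 * ww x.1 ((⌊p.1⌋, ⌊p.2⌋) - x.2) := by
    intro x
    simp [latticeTile, Int.floor_sub_intCast, Prod.sub_def]
  calc latticeTile A u p = u (⌊p.1⌋, ⌊p.2⌋) := rfl
    _ = ∑ x ∈ s, (c x.1).coeff x.2 * ww x.1 ((⌊p.1⌋, ⌊p.2⌋) - x.2) := expand _
    _ = ∑ x ∈ s.attach, (c x.1.1).coeff x.1.2 * ww x.1.1 ((⌊p.1⌋, ⌊p.2⌋) - x.1.2) :=
        (Finset.sum_attach s _).symm
    _ = ∑ x : {x // x ∈ s}, (c x.1.1).coeff x.1.2 * ww x.1.1 ((⌊p.1⌋, ⌊p.2⌋) - x.1.2) :=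
        rfl
    _ = _ := by
        rw [← Equiv.sum_comp s.equivFin.symm
          (fun x : {x // x ∈ s} => (c x.1.1).coeff x.1.2 * ww x.1.1 ((⌊p.1⌋, ⌊p.2⌋) - x.1.2))]
        exact Finset.sum_congr rfl fun i _ => (hterm _).symm
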